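/- Let f : [0,1] → [0,1] be continuous on [0,1], differentiable on (0,1), with f(1) = 1, f(x) > 0 for x > 0, lim_{x→0+} f(x) = 0, and suppose there is c > 0 such that (f'(x))² / f(x) = c / x for all x ∈ (0,1), with f' ≥ 0. Then f(x) = x for all x ∈ [0,1] (and c = 1). -/

import Mathlib

/-- The metric-compatibility ODE: if `f : [0,1] → [0,1]` is continuous, differentiable on
`(0,1)`, with `f 1 = 1`, `f > 0` on `(0,1]`, `f → 0` at `0⁺`, nondecreasing derivative sign
`f' ≥ 0`, and `(f')²/f = c/x` on `(0,1)` for some `c > 0`, then `f = id` and `c = 1`. -/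
theorem stmt4 (f : ℝ → ℝ) (c : ℝ) (hc : 0 < c)
    (hcont : ContinuousOn f (Set.Icc 0 1))
    (hmaps : ∀ x ∈ Set.Icc (0:ℝ) 1, f x ∈ Set.Icc (0:ℝ) 1)
    (hdiff : ∀ x ∈ Set.Ioo (0:ℝ) 1, DifferentiableAt ℝ f x)
    (hf1 : f 1 = 1)
    (hpos : ∀ x ∈ Set.Ioc (0:ℝ) 1, 0 < f x)
    (hlim : Filter.Tendsto f (nhdsWithin 0 (Set.Ioi 0)) (nhds 0))
    (hode : ∀ x ∈ Set.Ioo (0:ℝ) 1, (deriv f x) ^ 2 / f x = c / x)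
    (hmono : ∀ x ∈ Set.Ioo (0:ℝ) 1, 0 ≤ deriv f x) :
    (∀ x ∈ Set.Icc (0:ℝ) 1, f x = x) ∧ c = 1 := by
  set h : ℝ → ℝ := fun x => Real.sqrt (f x) - Real.sqrt c * Real.sqrt x with hh
  -- derivative of h is 0 on Ioo 0 1
  have hderiv : ∀ x ∈ Set.Ioo (0:ℝ) 1, HasDerivAt h 0 x := by
    intro x hx
    have hx0 : 0 < x := hx.1
    have hfx : 0 < f x := hpos x ⟨hx.1, le_of_lt hx.2⟩
    have hd1 : HasDerivAt (fun y => Real.sqrt (f y))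
        (1 / (2 * Real.sqrt (f x)) * deriv f x) x :=
      (Real.hasDerivAt_sqrt hfx.ne').comp x (hdiff x hx).hasDerivAt
    have hd2 : HasDerivAt (fun y => Real.sqrt c * Real.sqrt y)
        (Real.sqrt c * (1 / (2 * Real.sqrt x))) x :=
      (Real.hasDerivAt_sqrt hx0.ne').const_mul _
    have hsq : (deriv f x) ^ 2 = c / x * f x := by
      have := hode x hx
      field_simp at this ⊢
      linarith [this]
    have hdf : deriv f x = Real.sqrt c * Real.sqrt (f x) / Real.sqrt x := by
      have h1 : deriv f x = Real.sqrt ((deriv f x) ^ 2) := by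
        rw [Real.sqrt_sq (hmono x hx)]
      rw [h1, hsq, Real.sqrt_mul (by positivity), Real.sqrt_div hc.le]
      ring
    have key : 1 / (2 * Real.sqrt (f x)) * deriv f x
        - Real.sqrt c * (1 / (2 * Real.sqrt x)) = 0 := by
      rw [hdf]
      have h1 : Real.sqrt (f x) ≠ 0 := Real.sqrt_ne_zero'.2 hfx
      have h2 : Real.sqrt x ≠ 0 := Real.sqrt_ne_zero'.2 hx0
      field_simp
      ring
    have := hd1.sub hd2
    rwa [key] at this
  -- h is constant = h 1 on (0,1]
  have hgcont : ContinuousOn h (Set.Icc 0 1) := by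
    apply ContinuousOn.sub
    · exact Real.continuous_sqrt.comp_continuousOn hcont
    · exact (continuous_const.mul Real.continuous_sqrt).continuousOn
  have hconst : ∀ x ∈ Set.Ioc (0:ℝ) 1, h x = h 1 := by
    intro x hx
    have := constant_of_has_deriv_right_zero
      (f := h) (a := x) (b := 1)
      (hgcont.mono (Set.Icc_subset_Icc hx.1.le le_rfl))
      (fun y hy => (hderiv y ⟨lt_of_lt_of_le hx.1 hy.1, hy.2⟩).hasDerivWithinAt)
      1 ⟨hx.2, le_refl 1⟩
    exact this.symm
  -- limit of h at 0+ is 0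
  have hlimh : Filter.Tendsto h (nhdsWithin 0 (Set.Ioi 0)) (nhds 0) := by
    have h1 : Filter.Tendsto (fun x => Real.sqrt (f x)) (nhdsWithin 0 (Set.Ioi 0))
        (nhds 0) := by
      have := (Real.continuous_sqrt.tendsto 0).comp hlim
      simpa [Function.comp_def] using this
    have h2 : Filter.Tendsto (fun x : ℝ => Real.sqrt c * Real.sqrt x)
        (nhdsWithin 0 (Set.Ioi 0)) (nhds 0) := by
      have := ((Real.continuous_sqrt.tendsto 0).const_mul (Real.sqrt c)).mono_left
        (nhdsWithin_le_nhds (s := Set.Ioi 0))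
      simpa using this
    simpa using h1.sub h2
  -- also h tends to h 1 (eventually constant)
  have hlimh' : Filter.Tendsto h (nhdsWithin 0 (Set.Ioi 0)) (nhds (h 1)) := by
    apply Filter.Tendsto.congr' _ tendsto_const_nhds
    filter_upwards [Ioo_mem_nhdsGT_of_mem (by norm_num : (0:ℝ) ∈ Set.Ico 0 1)] with y hy
    exact (hconst y ⟨hy.1, hy.2.le⟩).symm
  have hne : (nhdsWithin (0:ℝ) (Set.Ioi 0)).NeBot := inferInstance
  have h10 : h 1 = 0 := tendsto_nhds_unique hlimh' hlimh
  -- h 1 = 1 - sqrt c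
  have hsc : Real.sqrt c = 1 := by
    have e : h 1 = 1 - Real.sqrt c := by simp [hh, hf1]
    linarith [h10, e]
  have hc1 : c = 1 := by
    have := congrArg (fun t => t ^ 2) hsc
    simpa [Real.sq_sqrt hc.le] using this
  refine ⟨?_, hc1⟩
  intro x hx
  rcases eq_or_lt_of_le hx.1 with h0 | h0
  · -- x = 0 : f 0 = 0
    subst h0
    have t1 : Filter.Tendsto f (nhdsWithin 0 (Set.Ioo 0 1)) (nhds (f 0)) :=
      ((hcont 0 (by norm_num)).mono (fun y hy => ⟨hy.1.le, hy.2.le⟩)).tendsto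
    have t2 : Filter.Tendsto f (nhdsWithin 0 (Set.Ioo 0 1)) (nhds 0) :=
      hlim.mono_left (nhdsWithin_mono _ Set.Ioo_subset_Ioi_self)
    have : (nhdsWithin (0:ℝ) (Set.Ioo 0 1)).NeBot :=
      left_nhdsWithin_Ioo_neBot (by norm_num)
    exact tendsto_nhds_unique t1 t2
  · -- x ∈ (0,1]
    have hx' : x ∈ Set.Ioc (0:ℝ) 1 := ⟨h0, hx.2⟩
    have := hconst x hx'
    rw [h10, hh] at this
    simp only [hsc, one_mul] at this
    have hs : Real.sqrt (f x) = Real.sqrt x := by linarith [this]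
    calc f x = Real.sqrt (f x) ^ 2 := (Real.sq_sqrt (hpos x hx').le).symm
    _ = Real.sqrt x ^ 2 := by rw [hs]
    _ = x := Real.sq_sqrt h0.le
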